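/- arXiv:0903.1370 — 2 statements merged into one kernel-verified Lean document; each statement's English description precedes it below -/
import Mathlib

section
/- Let H2 = {η ∈ L²(ℝ) : ∫_ℝ (|η'|² + y⁴|η|²) dy < ∞}. Then the quadratic form K(η) = ∫_ℝ y²|η|² dy is compact relative to the H2-norm, i.e., any sequence bounded in H2 has a subsequence along which K converges (equivalently, the embedding of H2 into the weighted space L²(ℝ, y² dy) is compact). -/
open MeasureTheory Filter Set Topology

lemma conj22 : Real.HolderConjugate 2 2 := Real.HolderConjugate.two_two

lemma memL2_intervalIntegrable (f : ℝ → ℝ) (hf : MemLp f 2 (volume : Measure ℝ)) (a b : ℝ) :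
    IntervalIntegrable f volume a b := by
  rw [intervalIntegrable_iff]
  have : IsFiniteMeasure (volume.restrict (Set.uIoc a b)) :=
    ⟨by rw [Measure.restrict_apply_univ]; exact measure_Ioc_lt_top⟩
  exact ((hf.restrict _).integrable (by norm_num))

lemma cs_interval (f : ℝ → ℝ) (a b : ℝ) (hab : a ≤ b)
    (hm : AEStronglyMeasurable f (volume.restrict (Ioc a b)))
    (hi : IntegrableOn (fun y => f y ^ 2) (Ioc a b)) :
    (∫ y in Ioc a b, f y) ^ 2 ≤ (b - a) * ∫ y in Ioc a b, f y ^ 2 := by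
  have hfin : IsFiniteMeasure (volume.restrict (Ioc a b)) :=
    ⟨by rw [Measure.restrict_apply_univ]; exact measure_Ioc_lt_top⟩
  have h2 : MemLp (fun y => ‖f y‖) 2 (volume.restrict (Ioc a b)) := by
    rw [memLp_two_iff_integrable_sq hm.norm]
    simpa [sq_abs] using hi.integrable
  have h1 : MemLp (fun _ : ℝ => (1:ℝ)) 2 (volume.restrict (Ioc a b)) := memLp_const 1
  have key := integral_mul_le_Lp_mul_Lq_of_nonneg conj22
    (Eventually.of_forall fun y => norm_nonneg (f y))
    (Eventually.of_forall fun _ : ℝ => (zero_le_one : (0:ℝ) ≤ 1))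
    (by simpa using h2) (by simpa using h1)
  simp only [mul_one, Real.one_rpow] at key
  have hone : ∫ (_ : ℝ) in Ioc a b, (1:ℝ) = b - a := by
    simp [Real.volume_Ioc, ENNReal.toReal_ofReal (sub_nonneg.2 hab), hab]
  rw [hone] at key
  have habs : |∫ y in Ioc a b, f y| ≤ ∫ y in Ioc a b, ‖f y‖ := by
    simpa using norm_integral_le_integral_norm (μ := volume.restrict (Ioc a b)) f
  have hsq : ∫ y in Ioc a b, ‖f y‖ ^ (2:ℝ) = ∫ y in Ioc a b, f y ^ 2 := by
    apply integral_congr_ae; filter_upwards with y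
    rw [show ((2:ℝ)) = ((2:ℕ):ℝ) by norm_num, Real.rpow_natCast]
    simp [sq_abs]
  rw [hsq] at key
  have hI2 : 0 ≤ ∫ y in Ioc a b, f y ^ 2 :=
    integral_nonneg fun y => sq_nonneg _
  have h3 : (∫ y in Ioc a b, f y) ^ 2 ≤ (∫ y in Ioc a b, ‖f y‖) ^ 2 := by
    rw [← sq_abs (∫ y in Ioc a b, f y)]
    exact pow_le_pow_left₀ (abs_nonneg _) habs 2
  refine h3.trans ?_
  have key2 : (∫ y in Ioc a b, ‖f y‖) ^ 2 ≤
      ((∫ y in Ioc a b, f y ^ 2) ^ ((1:ℝ)/2) * (b - a) ^ ((1:ℝ)/2)) ^ 2 := by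
    apply pow_le_pow_left₀ (integral_nonneg fun y => norm_nonneg _) key
  refine key2.trans_eq ?_
  rw [mul_pow, ← Real.rpow_natCast ((∫ y in Ioc a b, f y ^ 2) ^ ((1:ℝ)/2)) 2,
    ← Real.rpow_natCast ((b - a) ^ ((1:ℝ)/2)) 2, ← Real.rpow_mul hI2,
    ← Real.rpow_mul (sub_nonneg.2 hab)]
  norm_num
  rw [mul_comm]

lemma holder_est (f : ℝ → ℝ) (C0 : ℝ) (hd : Differentiable ℝ f)
    (hi : Integrable (fun y => deriv f y ^ 2) (volume : Measure ℝ))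
    (hb : ∫ y : ℝ, deriv f y ^ 2 ≤ C0) :
    ∀ x z : ℝ, (f x - f z) ^ 2 ≤ C0 * |x - z| := by
  have hmd : Measurable (deriv f) := measurable_deriv f
  have hml2 : MemLp (deriv f) 2 (volume : Measure ℝ) := by
    rw [memLp_two_iff_integrable_sq hmd.aestronglyMeasurable]; exact hi
  have key : ∀ x z : ℝ, z ≤ x → (f x - f z) ^ 2 ≤ C0 * |x - z| := by
    intro x z hzx
    have hftc : ∫ y in z..x, deriv f y = f x - f z :=
      intervalIntegral.integral_deriv_eq_sub (fun y _ => hd y)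
        (memL2_intervalIntegrable _ hml2 _ _)
    rw [← hftc, intervalIntegral.integral_of_le hzx]
    have hcs := cs_interval (deriv f) z x hzx
      (hmd.aestronglyMeasurable.restrict)
      (hi.integrableOn)
    refine hcs.trans ?_
    rw [abs_of_nonneg (sub_nonneg.2 hzx), mul_comm]
    have h1 : ∫ y in Ioc z x, deriv f y ^ 2 ≤ ∫ y : ℝ, deriv f y ^ 2 :=
      setIntegral_le_integral hi (Eventually.of_forall fun y => sq_nonneg _)
    have h2 : (0:ℝ) ≤ x - z := sub_nonneg.2 hzx
    nlinarith [h1.trans hb]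
  intro x z
  rcases le_total z x with h | h
  · exact key x z h
  · have := key z x h
    rw [abs_sub_comm] at this
    nlinarith [this]

lemma pt_bound (f : ℝ → ℝ) (C0 : ℝ) (hc : Continuous f)
    (hi4 : Integrable (fun y => y ^ 4 * f y ^ 2) (volume : Measure ℝ))
    (hb4 : ∫ y : ℝ, y ^ 4 * f y ^ 2 ≤ C0)
    (hholder : ∀ x z : ℝ, (f x - f z) ^ 2 ≤ C0 * |x - z|) :
    ∀ x : ℝ, f x ^ 2 ≤ 2 * C0 * (|x| + 3) := by
  obtain ⟨y0, hy0, hmin⟩ := (isCompact_Icc (a := (1:ℝ)) (b := 2)).exists_isMinOn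
    ⟨1, by norm_num⟩ ((hc.pow 2).continuousOn)
  have hnn : ∀ᵐ y : ℝ, 0 ≤ y ^ 4 * f y ^ 2 :=
    Eventually.of_forall fun y => mul_nonneg (by positivity) (sq_nonneg _)
  have h1 : f y0 ^ 2 * (volume (Icc (1:ℝ) 2)).toReal ≤ ∫ y in Icc (1:ℝ) 2, f y ^ 2 := by
    apply setIntegral_ge_of_const_le_real measurableSet_Icc (by simp [Real.volume_Icc])
    · exact fun x hx => hmin hx
    · exact (hc.pow 2).integrableOn_Icc
  have hvol : (volume (Icc (1:ℝ) 2)).toReal = 1 := by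
    simp [Real.volume_Icc]; norm_num
  rw [hvol, mul_one] at h1
  have h2 : ∫ y in Icc (1:ℝ) 2, f y ^ 2 ≤ ∫ y in Icc (1:ℝ) 2, y ^ 4 * f y ^ 2 := by
    apply setIntegral_mono_on (hc.pow 2).integrableOn_Icc hi4.integrableOn measurableSet_Icc
    intro y hy
    have hy4 : (1:ℝ) ≤ y ^ 4 := by
      nlinarith [hy.1, sq_nonneg y, sq_nonneg (y-1), sq_nonneg (y*y-1)]
    nlinarith [sq_nonneg (f y), hy4, show (f ^ 2) y = f y ^ 2 from rfl]
  have h3 : ∫ y in Icc (1:ℝ) 2, y ^ 4 * f y ^ 2 ≤ ∫ y : ℝ, y ^ 4 * f y ^ 2 :=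
    setIntegral_le_integral hi4 hnn
  have hy0C : f y0 ^ 2 ≤ C0 := by linarith
  have hC0 : 0 ≤ C0 := (sq_nonneg _).trans hy0C
  intro x
  have hh := hholder x y0
  have hxy : |x - y0| ≤ |x| + 2 := by
    have h1' : |y0| ≤ 2 := abs_le.2 ⟨by linarith [hy0.1], hy0.2⟩
    calc |x - y0| ≤ |x| + |y0| := abs_sub _ _
      _ ≤ |x| + 2 := by linarith
  nlinarith [sq_nonneg (f x - 2 * f y0), abs_nonneg x,
    mul_le_mul_of_nonneg_left hxy hC0]

lemma compl_Icc_abs {R y : ℝ} (hy : y ∈ (Icc (-R) R)ᶜ) : R < |y| := by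
  simp only [mem_compl_iff, mem_Icc, not_and_or, not_le] at hy
  rcases hy with h | h
  · linarith [neg_abs_le y]
  · linarith [le_abs_self y]

lemma weight_facts (f : ℝ → ℝ) (C0 : ℝ) (hC0 : 0 ≤ C0) (hc : Continuous f)
    (hi4 : Integrable (fun y => y ^ 4 * f y ^ 2) (volume : Measure ℝ))
    (hb4 : ∫ y : ℝ, y ^ 4 * f y ^ 2 ≤ C0) :
    Integrable (fun y => y ^ 2 * f y ^ 2) (volume : Measure ℝ) ∧
    ∀ R : ℝ, 1 ≤ R → ∫ y in (Icc (-R) R)ᶜ, y ^ 2 * f y ^ 2 ≤ C0 / R ^ 2 := by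
  have hmc : Continuous fun y : ℝ => y ^ 2 * f y ^ 2 := by continuity
  have hi2 : Integrable (fun y => y ^ 2 * f y ^ 2) (volume : Measure ℝ) := by
    have h1 : IntegrableOn (fun y : ℝ => y ^ 2 * f y ^ 2) (Icc (-1) 1) volume :=
      hmc.integrableOn_Icc
    have h2 : IntegrableOn (fun y : ℝ => y ^ 2 * f y ^ 2) ((Icc (-(1:ℝ)) 1)ᶜ) volume := by
      apply Integrable.mono' hi4.integrableOn hmc.aestronglyMeasurable.restrict
      rw [ae_restrict_iff' measurableSet_Icc.compl]
      refine Eventually.of_forall fun y hy => ?_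
      have h := compl_Icc_abs hy
      have hy2 : 1 ≤ y ^ 2 := by nlinarith [sq_abs y, abs_nonneg y]
      rw [Real.norm_eq_abs, abs_of_nonneg (by positivity)]
      nlinarith [mul_nonneg (mul_nonneg (sq_nonneg y) (sub_nonneg.2 hy2)) (sq_nonneg (f y))]
    have := h2.union h1
    rwa [compl_union_self, integrableOn_univ] at this
  refine ⟨hi2, fun R hR => ?_⟩
  have hR0 : (0:ℝ) < R := by linarith
  have key : ∫ y in (Icc (-R) R)ᶜ, y ^ 2 * f y ^ 2 ≤
      ∫ y in (Icc (-R) R)ᶜ, (y ^ 4 * f y ^ 2) / R ^ 2 := by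
    apply setIntegral_mono_on hi2.integrableOn (hi4.div_const _).integrableOn
      measurableSet_Icc.compl
    intro y hy
    have h := compl_Icc_abs hy
    have hy2 : R ^ 2 ≤ y ^ 2 := by nlinarith [sq_abs y, abs_nonneg y]
    rw [le_div_iff₀ (by positivity)]
    nlinarith [mul_nonneg (mul_nonneg (sq_nonneg y) (sq_nonneg (f y))) (sub_nonneg.2 hy2)]
  refine key.trans ?_
  rw [integral_div]
  have h4 : ∫ y in (Icc (-R) R)ᶜ, y ^ 4 * f y ^ 2 ≤ C0 :=
    (setIntegral_le_integral hi4
      (Eventually.of_forall fun y => by positivity)).trans hb4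
  gcongr

lemma cont_of_holder (f : ℝ → ℝ) (C0 : ℝ) (hC0 : 0 ≤ C0)
    (h : ∀ x z : ℝ, (f x - f z) ^ 2 ≤ C0 * |x - z|) : Continuous f := by
  rw [Metric.continuous_iff]
  intro x ε hε
  refine ⟨ε ^ 2 / (C0 + 1), by positivity, fun y hy => ?_⟩
  rw [Real.dist_eq] at hy ⊢
  have h1 := h y x
  have h2 : (f y - f x) ^ 2 < ε ^ 2 := by
    have h3 : (C0 + 1) * (ε ^ 2 / (C0 + 1)) = ε ^ 2 := by field_simp
    have h4 : C0 * |y - x| ≤ (C0 + 1) * |y - x| := by nlinarith [abs_nonneg (y - x)]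
    have h5 := mul_lt_mul_of_pos_left hy (show (0:ℝ) < C0 + 1 by linarith)
    linarith
  exact abs_lt_of_sq_lt_sq h2 hε.le

set_option maxHeartbeats 1000000 in
/-- On `H2 = {η ∈ L²(ℝ) : ∫ (|η'|² + y⁴|η|²) < ∞}` the quadratic form
`K(η) = ∫ y²|η|²` is compact relative to the H2-norm: any sequence bounded in H2 has a
subsequence converging in the weighted space `L²(ℝ, y² dy)`. -/
theorem compact_embedding_H2_weightedL2
    (η : ℕ → ℝ → ℝ) (C : ℝ)
    (hdiff : ∀ n, Differentiable ℝ (η n))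
    (hL2 : ∀ n, MemLp (η n) 2 (volume : Measure ℝ))
    (hint : ∀ n, Integrable (fun y => (deriv (η n) y) ^ 2 + y ^ 4 * (η n y) ^ 2)
      (volume : Measure ℝ))
    (hbound : ∀ n, ∫ y : ℝ, ((deriv (η n) y) ^ 2 + y ^ 4 * (η n y) ^ 2) ≤ C) :
    ∃ (φ : ℕ → ℕ) (ζ : ℝ → ℝ), StrictMono φ ∧
      Integrable (fun y => y ^ 2 * (ζ y) ^ 2) (volume : Measure ℝ) ∧
      Tendsto (fun k => ∫ y : ℝ, y ^ 2 * (η (φ k) y - ζ y) ^ 2) atTop (nhds 0) := by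
  classical
  set C0 := max C 0 with hC0def
  have hC0 : 0 ≤ C0 := le_max_right _ _
  have hCC0 : C ≤ C0 := le_max_left _ _
  have hcont : ∀ n, Continuous (η n) := fun n => (hdiff n).continuous
  have hmd : ∀ n, Measurable (deriv (η n)) := fun n => measurable_deriv _
  have hd2i : ∀ n, Integrable (fun y => deriv (η n) y ^ 2) (volume : Measure ℝ) := by
    intro n
    refine (hint n).mono' ((hmd n).pow_const 2).aestronglyMeasurable
      (Eventually.of_forall fun y => ?_)
    rw [Real.norm_eq_abs, abs_of_nonneg (sq_nonneg _)]
    have : (0:ℝ) ≤ y ^ 4 * η n y ^ 2 := by positivity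
    linarith
  have h4i : ∀ n, Integrable (fun y => y ^ 4 * η n y ^ 2) (volume : Measure ℝ) := by
    intro n
    refine (hint n).mono'
      (((continuous_pow 4).mul ((hcont n).pow 2)).aestronglyMeasurable)
      (Eventually.of_forall fun y => ?_)
    rw [Real.norm_eq_abs, abs_of_nonneg (by positivity)]
    linarith [sq_nonneg (deriv (η n) y)]
  have hd2b : ∀ n, ∫ y : ℝ, deriv (η n) y ^ 2 ≤ C0 := by
    intro n
    refine le_trans (integral_mono (hd2i n) (hint n) fun y => ?_)
      ((hbound n).trans hCC0)
    have : (0:ℝ) ≤ y ^ 4 * η n y ^ 2 := by positivity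
    linarith
  have h4b : ∀ n, ∫ y : ℝ, y ^ 4 * η n y ^ 2 ≤ C0 := by
    intro n
    refine le_trans (integral_mono (h4i n) (hint n) fun y => ?_)
      ((hbound n).trans hCC0)
    linarith [sq_nonneg (deriv (η n) y)]
  have hhol : ∀ n (x z : ℝ), (η n x - η n z) ^ 2 ≤ C0 * |x - z| :=
    fun n => holder_est (η n) C0 (hdiff n) (hd2i n) (hd2b n)
  have hpt : ∀ n (x : ℝ), η n x ^ 2 ≤ 2 * C0 * (|x| + 3) :=
    fun n => pt_bound (η n) C0 (hcont n) (h4i n) (h4b n) (hhol n)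
  -- Extraction of a subsequence converging at all rationals
  set B : ℚ → ℝ := fun q => Real.sqrt (2 * C0 * (|(q:ℝ)| + 3)) with hB
  have hmem : ∀ n, (fun q : ℚ => η n q) ∈ univ.pi (fun q : ℚ => Icc (-B q) (B q)) := by
    intro n
    rw [mem_univ_pi]
    intro q
    have h1 : |η n q| ≤ B q := by
      rw [hB, ← Real.sqrt_sq_eq_abs]
      exact Real.sqrt_le_sqrt (hpt n q)
    exact mem_Icc.2 (abs_le.1 h1)
  obtain ⟨g, -, φ, hφ, hconv⟩ :=
    (isCompact_univ_pi fun q : ℚ => isCompact_Icc).tendsto_subseq hmem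
  have hq : ∀ q : ℚ, Tendsto (fun k => η (φ k) q) atTop (𝓝 (g q)) :=
    fun q => ((continuous_apply q).tendsto g).comp hconv
  -- Pointwise limit everywhere
  have hex : ∀ x : ℝ, ∃ L : ℝ, Tendsto (fun k => η (φ k) x) atTop (𝓝 L) := by
    intro x
    have hcs : CauchySeq (fun k => η (φ k) x) := by
      rw [Metric.cauchySeq_iff]
      intro ε hε
      obtain ⟨q, hq'⟩ := exists_rat_near x
        (show (0:ℝ) < ε ^ 2 / (16 * (C0 + 1)) by positivity)
      have hqc : CauchySeq (fun k => η (φ k) q) := (hq q).cauchySeq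
      rw [Metric.cauchySeq_iff] at hqc
      obtain ⟨N, hN⟩ := hqc (ε / 4) (by positivity)
      refine ⟨N, fun m hm n hn => ?_⟩
      have hsmall : ∀ k, |η (φ k) x - η (φ k) q| < ε / 4 := by
        intro k
        have h1 := hhol (φ k) x q
        apply abs_lt_of_sq_lt_sq ?_ (by positivity)
        have h2 : C0 * |x - (q:ℝ)| < (C0 + 1) * (ε ^ 2 / (16 * (C0 + 1))) := by
          nlinarith [abs_nonneg (x - (q:ℝ)),
            mul_lt_mul_of_pos_left hq' (show (0:ℝ) < C0 + 1 by linarith)]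
        have h3 : (C0 + 1) * (ε ^ 2 / (16 * (C0 + 1))) = ε ^ 2 / 16 := by
          field_simp
        nlinarith
      have hmid := hN m hm n hn
      rw [Real.dist_eq] at hmid
      rw [Real.dist_eq]
      have t1 := abs_sub_le (η (φ m) x) (η (φ m) q) (η (φ n) x)
      have t2 := abs_sub_le (η (φ m) q) (η (φ n) q) (η (φ n) x)
      have t3 : |η (φ n) q - η (φ n) x| = |η (φ n) x - η (φ n) q| := abs_sub_comm _ _
      linarith [hsmall m, hsmall n]
    exact cauchySeq_tendsto_of_complete hcs
  choose ζ hζ using hex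
  have hholζ : ∀ x z : ℝ, (ζ x - ζ z) ^ 2 ≤ C0 * |x - z| := by
    intro x z
    apply le_of_tendsto (((hζ x).sub (hζ z)).pow 2)
    exact Eventually.of_forall fun k => hhol (φ k) x z
  have hcζ : Continuous ζ := cont_of_holder ζ C0 hC0 hholζ
  have hptζ : ∀ x : ℝ, ζ x ^ 2 ≤ 2 * C0 * (|x| + 3) := fun x =>
    le_of_tendsto ((hζ x).pow 2) (Eventually.of_forall fun k => hpt (φ k) x)
  -- Fatou for ζ
  have hfatou : ∫⁻ y : ℝ, ENNReal.ofReal (y ^ 4 * ζ y ^ 2) ≤ ENNReal.ofReal C0 := by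
    have hlim : ∀ y : ℝ, Tendsto (fun k => ENNReal.ofReal (y ^ 4 * η (φ k) y ^ 2)) atTop
        (𝓝 (ENNReal.ofReal (y ^ 4 * ζ y ^ 2))) := fun y =>
      (ENNReal.continuous_ofReal.tendsto _).comp (((hζ y).pow 2).const_mul (y ^ 4))
    have hkb : ∀ k, ∫⁻ y : ℝ, ENNReal.ofReal (y ^ 4 * η (φ k) y ^ 2) ≤ ENNReal.ofReal C0 := by
      intro k
      rw [← ofReal_integral_eq_lintegral_ofReal (h4i (φ k))
        (Eventually.of_forall fun y => by positivity)]
      exact ENNReal.ofReal_le_ofReal (h4b (φ k))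
    calc ∫⁻ y : ℝ, ENNReal.ofReal (y ^ 4 * ζ y ^ 2)
        = ∫⁻ y : ℝ, liminf (fun k => ENNReal.ofReal (y ^ 4 * η (φ k) y ^ 2)) atTop :=
          lintegral_congr fun y => ((hlim y).liminf_eq).symm
      _ ≤ liminf (fun k => ∫⁻ y : ℝ, ENNReal.ofReal (y ^ 4 * η (φ k) y ^ 2)) atTop :=
          lintegral_liminf_le fun k =>
            (((continuous_pow 4).mul ((hcont (φ k)).pow 2)).measurable).ennreal_ofReal
      _ ≤ liminf (fun _ : ℕ => ENNReal.ofReal C0) atTop :=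
          liminf_le_liminf (Eventually.of_forall hkb)
      _ = ENNReal.ofReal C0 := liminf_const _
  have hi4ζ : Integrable (fun y => y ^ 4 * ζ y ^ 2) (volume : Measure ℝ) := by
    constructor
    · exact ((continuous_pow 4).mul (hcζ.pow 2)).aestronglyMeasurable
    · rw [hasFiniteIntegral_iff_ofReal (Eventually.of_forall fun y => by positivity)]
      exact lt_of_le_of_lt hfatou ENNReal.ofReal_lt_top
  have hb4ζ : ∫ y : ℝ, y ^ 4 * ζ y ^ 2 ≤ C0 := by
    rw [integral_eq_lintegral_of_nonneg_ae (f := fun y => y ^ 4 * ζ y ^ 2)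
      (Eventually.of_forall fun y => show (0:ℝ) ≤ y ^ 4 * ζ y ^ 2 by positivity)
      (((continuous_pow 4).mul (hcζ.pow 2)).aestronglyMeasurable)]
    calc (∫⁻ y : ℝ, ENNReal.ofReal (y ^ 4 * ζ y ^ 2)).toReal
        ≤ (ENNReal.ofReal C0).toReal :=
          ENNReal.toReal_mono ENNReal.ofReal_ne_top hfatou
      _ = C0 := ENNReal.toReal_ofReal hC0
  obtain ⟨hi2ζ, htailζ⟩ := weight_facts ζ C0 hC0 hcζ hi4ζ hb4ζ
  have hWη := fun n => weight_facts (η n) C0 hC0 (hcont n) (h4i n) (h4b n)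
  -- Integrability of the differences
  have hidiff : ∀ k, Integrable (fun y => y ^ 2 * (η (φ k) y - ζ y) ^ 2)
      (volume : Measure ℝ) := by
    intro k
    refine Integrable.mono' (((hWη (φ k)).1.const_mul 2).add (hi2ζ.const_mul 2))
      (((continuous_pow 2).mul (((hcont (φ k)).sub hcζ).pow 2)).aestronglyMeasurable)
      (Eventually.of_forall fun y => ?_)
    rw [Real.norm_eq_abs, abs_of_nonneg (by positivity)]
    simp only [Pi.add_apply]
    nlinarith [mul_nonneg (sq_nonneg y) (sq_nonneg (η (φ k) y + ζ y))]
  refine ⟨φ, ζ, hφ, hi2ζ, ?_⟩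
  rw [Metric.tendsto_atTop]
  intro ε hε
  -- choose R
  obtain ⟨R, hR1, hR2⟩ : ∃ R : ℝ, 1 ≤ R ∧ 8 * C0 / R ^ 2 < ε / 2 := by
    obtain ⟨n, hn⟩ := exists_nat_gt (max 1 (Real.sqrt (32 * (C0 + 1) / ε)))
    refine ⟨n, le_trans (le_max_left _ _) hn.le, ?_⟩
    have h1 : Real.sqrt (32 * (C0 + 1) / ε) < n := lt_of_le_of_lt (le_max_right _ _) hn
    have h2 : 32 * (C0 + 1) / ε < (n:ℝ) ^ 2 := by
      have hs := Real.sq_sqrt (show (0:ℝ) ≤ 32 * (C0 + 1) / ε by positivity)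
      nlinarith [Real.sqrt_nonneg (32 * (C0 + 1) / ε)]
    have hn0 : (0:ℝ) < n := lt_of_lt_of_le one_pos (le_trans (le_max_left _ _) hn.le)
    rw [div_lt_iff₀ (by positivity)]
    have h3 : ε * (32 * (C0 + 1) / ε) = 32 * (C0 + 1) := by field_simp
    nlinarith [mul_lt_mul_of_pos_left h2 hε]
  have hR0 : (0:ℝ) < R := by linarith
  -- tail bound
  have htail : ∀ k, ∫ y in (Icc (-R) R)ᶜ, y ^ 2 * (η (φ k) y - ζ y) ^ 2 ≤ 4 * C0 / R ^ 2 := by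
    intro k
    have hmono : ∫ y in (Icc (-R) R)ᶜ, y ^ 2 * (η (φ k) y - ζ y) ^ 2 ≤
        ∫ y in (Icc (-R) R)ᶜ, (2 * (y ^ 2 * η (φ k) y ^ 2) + 2 * (y ^ 2 * ζ y ^ 2)) := by
      apply setIntegral_mono_on (hidiff k).integrableOn
        ((((hWη (φ k)).1.const_mul 2).add (hi2ζ.const_mul 2)).integrableOn)
        measurableSet_Icc.compl
      intro y hy
      simp only [Pi.add_apply]
      nlinarith [mul_nonneg (sq_nonneg y) (sq_nonneg (η (φ k) y + ζ y))]
      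
    refine hmono.trans ?_
    rw [integral_add (((hWη (φ k)).1.const_mul 2).integrableOn)
      ((hi2ζ.const_mul 2).integrableOn), integral_const_mul, integral_const_mul]
    have t1 := (hWη (φ k)).2 R hR1
    have t2 := htailζ R hR1
    have : 4 * C0 / R ^ 2 = 2 * (C0 / R ^ 2) + 2 * (C0 / R ^ 2) := by ring
    rw [this]
    linarith
  -- dominated convergence on the compact part
  have hdct : Tendsto (fun k => ∫ y in Icc (-R) R, y ^ 2 * (η (φ k) y - ζ y) ^ 2) atTop
      (𝓝 0) := by
    have := tendsto_integral_of_dominated_convergence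
      (F := fun k (y : ℝ) => y ^ 2 * (η (φ k) y - ζ y) ^ 2)
      (f := fun _ : ℝ => (0:ℝ))
      (μ := volume.restrict (Icc (-R) R))
      (bound := fun _ : ℝ => R ^ 2 * (8 * C0 * (R + 3)))
      (fun k => (((continuous_pow 2).mul
        (((hcont (φ k)).sub hcζ).pow 2)).aestronglyMeasurable).restrict)
      (integrableOn_const measure_Icc_lt_top.ne)
      ?_ ?_
    · simpa using this
    · intro k
      rw [ae_restrict_iff' measurableSet_Icc]
      refine Eventually.of_forall fun y hy => ?_
      rw [Real.norm_eq_abs, abs_of_nonneg (by positivity)]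
      obtain ⟨hy1, hy2⟩ := hy
      have hy2' : y ^ 2 ≤ R ^ 2 := by nlinarith
      have hb1 := hpt (φ k) y
      have hb2 := hptζ y
      have hyR : |y| ≤ R := abs_le.2 ⟨hy1, hy2⟩
      have h5 : (η (φ k) y - ζ y) ^ 2 ≤ 8 * C0 * (R + 3) := by
        nlinarith [sq_nonneg (η (φ k) y + ζ y), abs_nonneg y,
          mul_le_mul_of_nonneg_left hyR (show (0:ℝ) ≤ 4 * C0 by linarith)]
      exact mul_le_mul hy2' h5 (sq_nonneg _) (by positivity)
    · refine Eventually.of_forall fun y => ?_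
      simpa using (((hζ y).sub (tendsto_const_nhds (x := ζ y))).pow 2).const_mul (y ^ 2)
  rw [Metric.tendsto_atTop] at hdct
  obtain ⟨N, hN⟩ := hdct (ε / 4) (by positivity)
  refine ⟨N, fun k hk => ?_⟩
  have hsplit : (∫ y in Icc (-R) R, y ^ 2 * (η (φ k) y - ζ y) ^ 2) +
      (∫ y in (Icc (-R) R)ᶜ, y ^ 2 * (η (φ k) y - ζ y) ^ 2) =
      ∫ y : ℝ, y ^ 2 * (η (φ k) y - ζ y) ^ 2 :=
    integral_add_compl measurableSet_Icc (hidiff k)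
  have h1 := hN k hk
  rw [Real.dist_eq, sub_zero] at h1
  rw [Real.dist_eq, sub_zero]
  have hnn : 0 ≤ ∫ y : ℝ, y ^ 2 * (η (φ k) y - ζ y) ^ 2 :=
    integral_nonneg fun y => by positivity
  rw [abs_of_nonneg hnn, ← hsplit]
  have h2 : ∫ y in Icc (-R) R, y ^ 2 * (η (φ k) y - ζ y) ^ 2 < ε / 4 :=
    lt_of_le_of_lt (le_abs_self _) h1
  have h3 := htail k
  have h4 : (0:ℝ) ≤ C0 / R ^ 2 := by positivity
  have h5 : 4 * C0 / R ^ 2 ≤ 8 * C0 / R ^ 2 := by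
    gcongr
    linarith
  linarith
end

section
/- Under the assumption Λ̄ < 0, or Λ̄ ≤ 0 and κ = 1, the quadratic form Q(u) = ∫₀^∞ (|u'|² − Λ̄ r⁴|u|² + 4κ r²|u|²) dr satisfies Q(u) ≥ ε ∫₀^∞ (|u'|² + r^q |u|²) dr for some ε > 0, where q = 4 if Λ̄ < 0 and q = 2 if Λ̄ = 0 (and κ = 1). -/
open MeasureTheory Set

/-- Under `Λ̄ < 0`, or `Λ̄ ≤ 0` with `κ = 1`, the gravitational energy form
`Q(u) = ∫₀^∞ (|u'|² − Λ̄ r⁴|u|² + 4κ r²|u|²)` controls the H1-norm: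
`Q(u) ≥ ε ∫₀^∞ (|u'|² + r^q |u|²)` for some `ε > 0`, with `q = 4` if `Λ̄ < 0` and
`q = 2` if `Λ̄ = 0` (and `κ = 1`). -/
theorem gravitational_energy_coercive
    (Λ κ : ℝ) (hκ : κ = 0 ∨ κ = 1)
    (hΛκ : Λ < 0 ∨ (Λ ≤ 0 ∧ κ = 1))
    (q : ℝ) (hq : (Λ < 0 ∧ q = 4) ∨ (Λ = 0 ∧ κ = 1 ∧ q = 2)) :
    ∃ ε : ℝ, 0 < ε ∧
      ∀ u : ℝ → ℝ, Differentiable ℝ u → u 0 = 0 →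
        Integrable (fun r => (deriv u r) ^ 2) (volume.restrict (Ioi (0:ℝ))) →
        Integrable (fun r => r ^ q * (u r) ^ 2) (volume.restrict (Ioi (0:ℝ))) →
        Integrable (fun r => (-Λ * r ^ 4 + 4 * κ * r ^ 2) * (u r) ^ 2)
          (volume.restrict (Ioi (0:ℝ))) →
        (∫ r in Ioi (0:ℝ),
            ((deriv u r) ^ 2 - Λ * r ^ 4 * (u r) ^ 2 + 4 * κ * r ^ 2 * (u r) ^ 2))
          ≥ ε * ∫ r in Ioi (0:ℝ), ((deriv u r) ^ 2 + r ^ q * (u r) ^ 2) := by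
  have hκ0 : (0:ℝ) ≤ κ := by rcases hκ with h | h <;> simp [h]
  -- choose ε and establish the pointwise bound
  obtain ⟨ε, hε, hkey⟩ : ∃ ε : ℝ, 0 < ε ∧
      ∀ r : ℝ, 0 < r → ∀ v : ℝ, 0 ≤ v →
        ε * (r ^ q * v) ≤ (-Λ * r ^ 4 + 4 * κ * r ^ 2) * v := by
    rcases hq with ⟨hΛ, rfl⟩ | ⟨hΛ, hκ1, rfl⟩
    · refine ⟨min 1 (-Λ), lt_min one_pos (neg_pos.mpr hΛ), fun r hr v hv => ?_⟩
      have h1 : r ^ (4:ℝ) = r ^ (4:ℕ) := by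
        rw [show ((4:ℝ)) = ((4:ℕ):ℝ) by norm_num, Real.rpow_natCast]
      rw [h1]
      have h2 : min 1 (-Λ) ≤ -Λ := min_le_right _ _
      have h3 : (0:ℝ) ≤ r ^ (4:ℕ) := by positivity
      have h4 : (0:ℝ) ≤ r ^ (2:ℕ) := by positivity
      nlinarith [mul_nonneg (mul_nonneg hκ0 h4) hv, mul_nonneg h3 hv]
    · refine ⟨1, one_pos, fun r hr v hv => ?_⟩
      have h1 : r ^ (2:ℝ) = r ^ (2:ℕ) := by
        rw [show ((2:ℝ)) = ((2:ℕ):ℝ) by norm_num, Real.rpow_natCast]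
      rw [h1, hΛ, hκ1]
      have h4 : (0:ℝ) ≤ r ^ (2:ℕ) := by positivity
      nlinarith [mul_nonneg h4 hv]
  have hε1 : ε ≤ max ε 1 := le_max_left _ _
  -- use ε' = min ε 1
  refine ⟨min ε 1, lt_min hε one_pos, fun u hu hu0 hI1 hI2 hI3 => ?_⟩
  set ε' := min ε 1 with hε'
  have hε'ε : ε' ≤ ε := min_le_left _ _
  have hε'1 : ε' ≤ 1 := min_le_right _ _
  have hε'0 : 0 < ε' := lt_min hε one_pos
  -- rewrite LHS integrand
  have hLHSint : Integrable
      (fun r => (deriv u r) ^ 2 - Λ * r ^ 4 * (u r) ^ 2 + 4 * κ * r ^ 2 * (u r) ^ 2)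
      (volume.restrict (Ioi (0:ℝ))) := by
    have := hI1.add hI3
    refine this.congr (Filter.Eventually.of_forall fun r => ?_)
    simp only [Pi.add_apply]
    ring
  have hRHSint : Integrable
      (fun r => ε' * ((deriv u r) ^ 2 + r ^ q * (u r) ^ 2))
      (volume.restrict (Ioi (0:ℝ))) := (hI1.add hI2).const_mul _
  rw [ge_iff_le, ← MeasureTheory.integral_const_mul]
  refine setIntegral_mono_on hRHSint hLHSint measurableSet_Ioi fun r hr => ?_
  have hr0 : 0 < r := hr
  have h := hkey r hr0 ((u r) ^ 2) (sq_nonneg _)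
  have hd : ε' * (deriv u r) ^ 2 ≤ (deriv u r) ^ 2 := by
    nlinarith [sq_nonneg (deriv u r)]
  have h2 : ε' * (r ^ q * (u r) ^ 2) ≤ (-Λ * r ^ 4 + 4 * κ * r ^ 2) * (u r) ^ 2 := by
    calc ε' * (r ^ q * (u r) ^ 2) ≤ ε * (r ^ q * (u r) ^ 2) := by
          have hnn : 0 ≤ r ^ q * (u r) ^ 2 := by positivity
          exact mul_le_mul_of_nonneg_right hε'ε hnn
      _ ≤ _ := h
  nlinarith [h2, hd]
end
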